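/- Define a decreasing filtration of (A // A(1))_* by F^j (A // A(1))_* := τ^{-1}((⊕_{k ≥ j} M_2(k)) ⊗ (A(2) // A(1))_*). Then each F^j (A // A(1))_* is an A(2)_*-subcomodule, i.e., the A(2)_*-coaction preserves or raises this filtration. -/

import Mathlib

open TensorProduct

/-- The mod 2 dual Steenrod algebra on the conjugate generators:
`MvPolynomial.X k` represents `ξ̄_{k+1}`. -/
abbrev DualSteenrod : Type := MvPolynomial ℕ (ZMod 2)

/-- `xb k = ξ̄_k`, with `ξ̄_0 = 1`. -/
noncomputable def xb : ℕ → DualSteenrod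
  | 0 => 1
  | k + 1 => MvPolynomial.X k

/-- The coproduct: `ψ(ξ̄_k) = Σ_{k₁+k₂=k} ξ̄_{k₁} ⊗ ξ̄_{k₂}^{2^{k₁}}`. -/
noncomputable def psi : DualSteenrod →ₐ[ZMod 2] DualSteenrod ⊗[ZMod 2] DualSteenrod :=
  MvPolynomial.aeval fun n =>
    ∑ p ∈ Finset.range (n + 2), (xb p) ⊗ₜ[ZMod 2] ((xb (n + 1 - p)) ^ (2 ^ p))

/-- The ideal cutting out `A(2)_*`. -/
noncomputable def steenrodIdeal2 : Ideal DualSteenrod :=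
  Ideal.span (Set.range fun k : ℕ => (MvPolynomial.X k : DualSteenrod) ^ (2 ^ (3 - k)))

abbrev A2 : Type := DualSteenrod ⧸ steenrodIdeal2

/-- The left `A(2)_*`-coaction on `A_*` (restricting to `(A ⫽ A(1))_*`). -/
noncomputable def coactA2 : DualSteenrod →ₐ[ZMod 2] A2 ⊗[ZMod 2] DualSteenrod :=
  (Algebra.TensorProduct.map (Ideal.Quotient.mkₐ (ZMod 2) steenrodIdeal2)
    (AlgHom.id (ZMod 2) DualSteenrod)).comp psi

/-- Brown-Gitler weight: `ξ̄_{k+1}` has weight `2^k`. -/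
def bgWeight (d : ℕ →₀ ℕ) : ℕ := d.sum fun k e => e * 2 ^ k

/-- Exterior residue `(4ε₁, 2ε₂, ε₃, 0, …)` of an exponent. -/
noncomputable def dLow (d : ℕ →₀ ℕ) : ℕ →₀ ℕ :=
  Finsupp.single 0 (d 0 % 8) + Finsupp.single 1 (d 1 % 4) + Finsupp.single 2 (d 2 % 2)

/-- 2-divisible part `(8i₁, 4i₂, 2i₃, i₄, …)` of an exponent. -/
noncomputable def dHigh (d : ℕ →₀ ℕ) : ℕ →₀ ℕ := d - dLow d

/-- The monomial-splitting map `τ`. -/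
noncomputable def tau : DualSteenrod →ₗ[ZMod 2] DualSteenrod ⊗[ZMod 2] DualSteenrod :=
  (MvPolynomial.basisMonomials ℕ (ZMod 2)).constr (ZMod 2) fun d =>
    (MvPolynomial.monomial (dHigh d) 1) ⊗ₜ[ZMod 2] (MvPolynomial.monomial (dLow d) 1)

def isAA1 (d : ℕ →₀ ℕ) : Prop := 4 ∣ d 0 ∧ 2 ∣ d 1

def isAA2 (d : ℕ →₀ ℕ) : Prop := 8 ∣ d 0 ∧ 4 ∣ d 1 ∧ 2 ∣ d 2

def isExtMono (d : ℕ →₀ ℕ) : Prop :=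
  (d 0 = 0 ∨ d 0 = 4) ∧ (d 1 = 0 ∨ d 1 = 2) ∧ d 2 ≤ 1 ∧ ∀ k, 3 ≤ k → d k = 0

/-- `(A ⫽ A(1))_*` as the span of its monomials. -/
noncomputable def VAA1 : Submodule (ZMod 2) DualSteenrod :=
  Submodule.span (ZMod 2) {m | ∃ d, isAA1 d ∧ m = MvPolynomial.monomial d 1}

/-- `(⊕_{k ≥ j} M₂(k)) ⊗ (A(2) ⫽ A(1))_*`: span of basis tensors whose left factor
has Brown-Gitler weight at least `8j`. -/
noncomputable def Wge (j : ℕ) : Submodule (ZMod 2) (DualSteenrod ⊗[ZMod 2] DualSteenrod) :=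
  Submodule.span (ZMod 2)
    {t | ∃ a b : ℕ →₀ ℕ, isAA2 a ∧ 8 * j ≤ bgWeight a ∧ isExtMono b ∧
      t = (MvPolynomial.monomial a 1) ⊗ₜ[ZMod 2] (MvPolynomial.monomial b 1)}

/-- The decreasing filtration
`F^j (A ⫽ A(1))_* = τ⁻¹((⊕_{k ≥ j} M₂(k)) ⊗ (A(2) ⫽ A(1))_*)`. -/
noncomputable def Filt (j : ℕ) : Submodule (ZMod 2) DualSteenrod :=
  VAA1 ⊓ Submodule.comap tau (Wge j)


-- Auxiliary development for the proof of stmt11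
set_option synthInstance.maxHeartbeats 1000000
set_option maxHeartbeats 1000000

namespace Stmt11Aux
open MvPolynomial Finsupp

/-- per-variable low residue -/
def lowr (k e : ℕ) : ℕ :=
  if k = 0 then e % 8 else if k = 1 then e % 4 else if k = 2 then e % 2 else 0

lemma dLow_apply (d : ℕ →₀ ℕ) (k : ℕ) : dLow d k = lowr k (d k) := by
  rcases k with _ | _ | _ | k <;>
    simp [dLow, lowr, Finsupp.single_apply]

lemma lowr_le (k e : ℕ) : lowr k e ≤ e := by
  unfold lowr; split_ifs <;> omega

lemma dLow_le (d : ℕ →₀ ℕ) : dLow d ≤ d := by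
  rw [Finsupp.le_def]
  intro k
  rw [dLow_apply]
  exact lowr_le _ _

lemma dHigh_apply (d : ℕ →₀ ℕ) (k : ℕ) : dHigh d k = d k - lowr k (d k) := by
  rw [dHigh, Finsupp.tsub_apply, dLow_apply]

lemma dHigh_add_dLow (d : ℕ →₀ ℕ) : dHigh d + dLow d = d :=
  tsub_add_cancel_of_le (dLow_le d)

lemma bgWeight_eq_sum (d : ℕ →₀ ℕ) (s : Finset ℕ) (h : d.support ⊆ s) :
    bgWeight d = ∑ k ∈ s, d k * 2 ^ k :=
  Finsupp.sum_of_support_subset d h _ (by simp)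

lemma bgWeight_dHigh_eq (d : ℕ →₀ ℕ) :
    bgWeight (dHigh d) = ∑ k ∈ d.support, (d k - lowr k (d k)) * 2 ^ k := by
  rw [bgWeight_eq_sum (dHigh d) d.support
    (Finsupp.support_tsub.trans (le_refl _))]
  exact Finset.sum_congr rfl fun k _ => by rw [dHigh_apply]

lemma bgWeight_dHigh_single (k e : ℕ) :
    bgWeight (dHigh (Finsupp.single k e)) = (e - lowr k e) * 2 ^ k := by
  rw [bgWeight_eq_sum (dHigh (Finsupp.single k e)) {k}
    (Finsupp.support_tsub.trans Finsupp.support_single_subset)]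
  rw [Finset.sum_singleton, dHigh_apply, Finsupp.single_eq_same]

lemma W_split (d : ℕ →₀ ℕ) :
    bgWeight (dHigh d) = ∑ k ∈ d.support, bgWeight (dHigh (Finsupp.single k (d k))) := by
  rw [bgWeight_dHigh_eq]
  exact Finset.sum_congr rfl fun k _ => by rw [bgWeight_dHigh_single]

lemma bgWeight_add (d e : ℕ →₀ ℕ) : bgWeight (d + e) = bgWeight d + bgWeight e :=
  Finsupp.sum_add_index' (fun _ => by simp) (fun _ _ _ => by ring)

lemma bgWeight_dLow (d : ℕ →₀ ℕ) :
    bgWeight (dLow d) = d 0 % 8 + (d 1 % 4) * 2 + (d 2 % 2) * 4 := by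
  rw [dLow, bgWeight_add, bgWeight_add]
  have h : ∀ k e : ℕ, bgWeight (Finsupp.single k e) = e * 2 ^ k := fun k e =>
    Finsupp.sum_single_index (by simp)
  rw [h, h, h]
  ring

lemma bgWeight_split (d : ℕ →₀ ℕ) :
    bgWeight (dHigh d) + bgWeight (dLow d) = bgWeight d := by
  rw [← bgWeight_add, dHigh_add_dLow]

lemma W_superadd (d e : ℕ →₀ ℕ) :
    bgWeight (dHigh d) + bgWeight (dHigh e) ≤ bgWeight (dHigh (d + e)) := by
  have h1 := bgWeight_split d
  have h2 := bgWeight_split e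
  have h3 := bgWeight_split (d + e)
  have h4 := bgWeight_add d e
  have l1 := bgWeight_dLow d
  have l2 := bgWeight_dLow e
  have l3 := bgWeight_dLow (d + e)
  have a0 : (d + e) 0 = d 0 + e 0 := Finsupp.add_apply d e 0
  have a1 : (d + e) 1 = d 1 + e 1 := Finsupp.add_apply d e 1
  have a2 : (d + e) 2 = d 2 + e 2 := Finsupp.add_apply d e 2
  omega


abbrev TT : Type := A2 ⊗[ZMod 2] DualSteenrod

noncomputable abbrev iTT : CommRing TT := inferInstance
attribute [instance 2000] iTT
noncomputable abbrev aTT : Algebra (ZMod 2) TT := inferInstance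
attribute [instance 2000] aTT

noncomputable def piq : DualSteenrod →ₐ[ZMod 2] A2 := Ideal.Quotient.mkₐ (ZMod 2) steenrodIdeal2

/-- Target filtration submodules of `A2 ⊗ A_*`. -/
noncomputable def T (w : ℕ) : Submodule (ZMod 2) TT :=
  Submodule.span (ZMod 2) {t | ∃ (q : A2) (e : ℕ →₀ ℕ), isAA1 e ∧
    w ≤ bgWeight (dHigh e) ∧ t = q ⊗ₜ[ZMod 2] (MvPolynomial.monomial e 1)}

lemma T_mono {a b : ℕ} (h : a ≤ b) : T b ≤ T a :=
  Submodule.span_mono fun t ⟨q, e, h1, h2, h3⟩ => ⟨q, e, h1, h.trans h2, h3⟩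

lemma mem_T_gen (w : ℕ) (q : A2) (e : ℕ →₀ ℕ) (h : isAA1 e)
    (hw : w ≤ bgWeight (dHigh e)) : q ⊗ₜ[ZMod 2] (monomial e 1 : DualSteenrod) ∈ T w :=
  Submodule.subset_span ⟨q, e, h, hw, rfl⟩

lemma isAA1_single (i E : ℕ) (h0 : i = 0 → 4 ∣ E) (h1 : i = 1 → 2 ∣ E) :
    isAA1 (Finsupp.single i E) := by
  constructor <;> · rw [Finsupp.single_apply]
                    split_ifs with h
                    · subst h; first | exact h0 rfl | exact h1 rfl
                    · simp

lemma mem_T0_X (q : A2) (i E : ℕ) (h0 : i = 0 → 4 ∣ E) (h1 : i = 1 → 2 ∣ E) :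
    q ⊗ₜ[ZMod 2] ((X i : DualSteenrod) ^ E) ∈ T 0 := by
  rw [X_pow_eq_monomial]
  exact mem_T_gen 0 q _ (isAA1_single i E h0 h1) (Nat.zero_le _)

lemma mem_T0_one (q : A2) : q ⊗ₜ[ZMod 2] (1 : DualSteenrod) ∈ T 0 := by
  have := mem_T0_X q 0 0 (fun _ => ⟨0, rfl⟩) (fun h => by omega)
  rwa [pow_zero] at this

lemma one_mem_T0 : (1 : TT) ∈ T 0 := by
  rw [Algebra.TensorProduct.one_def]
  exact mem_T0_one 1

lemma mem_T_full (q : A2) (i E : ℕ) (h0 : i = 0 → E % 8 = 0) (h1 : i = 1 → E % 4 = 0)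
    (h2 : i = 2 → E % 2 = 0) :
    q ⊗ₜ[ZMod 2] ((X i : DualSteenrod) ^ E) ∈ T (E * 2 ^ i) := by
  rw [X_pow_eq_monomial]
  refine mem_T_gen _ q _ (isAA1_single i E (fun h => by have := h0 h; omega)
    (fun h => by have := h1 h; omega)) ?_
  rw [bgWeight_dHigh_single]
  have : lowr i E = 0 := by
    unfold lowr
    split_ifs with ha hb hc
    · exact h0 ha
    · exact h1 hb
    · exact h2 hc
    · rfl
  rw [this]
  simp

lemma T_mul_T {a b : ℕ} {x y : TT} (hx : x ∈ T a) (hy : y ∈ T b) :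
    x * y ∈ T (a + b) := by
  simp only [T] at hx hy
  induction hx using Submodule.span_induction with
  | mem m hm =>
      obtain ⟨q1, e1, h1, w1, rfl⟩ := hm
      induction hy using Submodule.span_induction with
      | mem n hn =>
          obtain ⟨q2, e2, h2, w2, rfl⟩ := hn
          rw [Algebra.TensorProduct.tmul_mul_tmul, MvPolynomial.monomial_mul, one_mul]
          refine mem_T_gen _ _ _ ⟨?_, ?_⟩ ?_
          · rw [Finsupp.add_apply]; exact dvd_add h1.1 h2.1
          · rw [Finsupp.add_apply]; exact dvd_add h1.2 h2.2
          · exact le_trans (Nat.add_le_add w1 w2) (W_superadd e1 e2)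
      | zero => rw [mul_zero]; exact Submodule.zero_mem _
      | add u v hu hv ihu ihv => rw [mul_add]; exact Submodule.add_mem _ ihu ihv
      | smul c u hu ihu => rw [mul_smul_comm]; exact Submodule.smul_mem _ _ ihu
  | zero => rw [zero_mul]; exact Submodule.zero_mem _
  | add u v hu hv ihu ihv => rw [add_mul]; exact Submodule.add_mem _ ihu ihv
  | smul c u hu ihu => rw [smul_mul_assoc]; exact Submodule.smul_mem _ _ ihu

lemma T_pow {a : ℕ} {x : TT} (hx : x ∈ T a) (n : ℕ) : x ^ n ∈ T (n * a) := by
  induction n with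
  | zero => simpa using one_mem_T0
  | succ n ih =>
      rw [pow_succ]
      have := T_mul_T ih hx
      rwa [show n * a + a = (n + 1) * a by ring] at this

lemma T_prod (s : Finset ℕ) (f : ℕ → TT) (w : ℕ → ℕ)
    (h : ∀ k ∈ s, f k ∈ T (w k)) : (∏ k ∈ s, f k) ∈ T (∑ k ∈ s, w k) := by
  induction s using Finset.cons_induction with
  | empty => simpa using one_mem_T0
  | cons k s hk ih =>
      rw [Finset.prod_cons, Finset.sum_cons]
      exact T_mul_T (h k (Finset.mem_cons_self k s)) (ih fun i hi => h i (Finset.mem_cons_of_mem hi))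

lemma xb_succ (k : ℕ) : xb (k + 1) = X k := rfl
lemma xb_zero : xb 0 = 1 := rfl

lemma psi_X (k : ℕ) : psi (X k : DualSteenrod) =
    ∑ p ∈ Finset.range (k + 2), (xb p) ⊗ₜ[ZMod 2] ((xb (k + 1 - p)) ^ (2 ^ p)) := by
  rw [psi]; exact MvPolynomial.aeval_X _ k

lemma coact_X (k : ℕ) : coactA2 (X k : DualSteenrod) =
    ∑ p ∈ Finset.range (k + 2), (piq (xb p)) ⊗ₜ[ZMod 2] ((xb (k + 1 - p)) ^ (2 ^ p)) := by
  rw [coactA2, AlgHom.comp_apply, psi_X, map_sum]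
  exact Finset.sum_congr rfl fun p _ => by rw [Algebra.TensorProduct.map_tmul]; rfl

lemma piq_zero {y : DualSteenrod} (h : y ∈ steenrodIdeal2) : piq y = 0 := by
  rw [piq, Ideal.Quotient.mkₐ_eq_mk]
  exact Ideal.Quotient.eq_zero_iff_mem.2 h

lemma piq_X0_8 : piq ((X 0 : DualSteenrod) ^ 8) = 0 :=
  piq_zero (Ideal.subset_span ⟨0, by norm_num⟩)

lemma piq_X1_4 : piq ((X 1 : DualSteenrod) ^ 4) = 0 :=
  piq_zero (Ideal.subset_span ⟨1, by norm_num⟩)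

lemma piq_X2_2 : piq ((X 2 : DualSteenrod) ^ 2) = 0 :=
  piq_zero (Ideal.subset_span ⟨2, by norm_num⟩)

lemma piq_X_ge3 (k : ℕ) (h : 3 ≤ k) : piq (X k : DualSteenrod) = 0 :=
  piq_zero (Ideal.subset_span ⟨k, by
    show (X k : DualSteenrod) ^ 2 ^ (3 - k) = X k
    rw [show 3 - k = 0 by omega, pow_zero, pow_one]⟩)

lemma sq_add (u v : TT) : (u + v) ^ 2 = u ^ 2 + v ^ 2 := by
  have h2 : (1 : TT) + 1 = 0 := by
    rw [← map_one (algebraMap (ZMod 2) TT), ← map_add,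
      show (1 : ZMod 2) + 1 = 0 by decide, map_zero]
  have h : (u + v) ^ 2 = u ^ 2 + v ^ 2 + ((1 : TT) + 1) * (u * v) := by ring
  rw [h, h2, zero_mul, add_zero]

lemma pow4_add (u v : TT) : (u + v) ^ 4 = u ^ 4 + v ^ 4 := by
  have h : (u + v) ^ 4 = ((u + v) ^ 2) ^ 2 := by ring
  rw [h, sq_add, sq_add]; ring

lemma pow8_add (u v : TT) : (u + v) ^ 8 = u ^ 8 + v ^ 8 := by
  have h : (u + v) ^ 8 = ((u + v) ^ 4) ^ 2 := by ring
  rw [h, pow4_add, sq_add]; ring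

lemma coact_X0 : coactA2 (X 0 : DualSteenrod) =
    (1 : A2) ⊗ₜ[ZMod 2] (X 0 : DualSteenrod) + piq (X 0) ⊗ₜ[ZMod 2] 1 := by
  rw [coact_X 0, Finset.sum_range_succ, Finset.sum_range_succ, Finset.sum_range_zero, zero_add]
  norm_num [xb_succ, xb_zero, map_one]

lemma coact_X0_8 : coactA2 ((X 0 : DualSteenrod) ^ 8) =
    (1 : A2) ⊗ₜ[ZMod 2] ((X 0 : DualSteenrod) ^ 8) := by
  rw [map_pow, coact_X0, pow8_add, Algebra.TensorProduct.tmul_pow,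
    Algebra.TensorProduct.tmul_pow, one_pow, one_pow, ← map_pow, piq_X0_8,
    TensorProduct.zero_tmul, add_zero]

lemma key0 (e : ℕ) (he : 4 ∣ e) : coactA2 ((X 0 : DualSteenrod) ^ e) ∈ T (e - e % 8) := by
  have hsplit : (X 0 : DualSteenrod) ^ e = ((X 0 : DualSteenrod) ^ 8) ^ (e / 8) * (X 0 : DualSteenrod) ^ (e % 8) := by
    rw [← pow_mul, ← pow_add]; congr 1; omega
  rw [hsplit, map_mul, map_pow, coact_X0_8]
  have h1 : ((1 : A2) ⊗ₜ[ZMod 2] ((X 0 : DualSteenrod) ^ 8)) ^ (e / 8) ∈ T (8 * (e / 8)) := by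
    rw [Algebra.TensorProduct.tmul_pow, one_pow, ← pow_mul]
    have := mem_T_full 1 0 (8 * (e / 8)) (fun _ => by omega) (fun h => by omega) (fun h => by omega)
    rwa [pow_zero, mul_one] at this
  have h2 : coactA2 ((X 0 : DualSteenrod) ^ (e % 8)) ∈ T 0 := by
    have h : e % 8 = 0 ∨ e % 8 = 4 := by omega
    rcases h with h | h <;> rw [h]
    · rw [pow_zero, map_one]; exact one_mem_T0
    · rw [map_pow, coact_X0, pow4_add, Algebra.TensorProduct.tmul_pow,
        Algebra.TensorProduct.tmul_pow, one_pow, one_pow]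
      exact Submodule.add_mem _ (mem_T0_X 1 0 4 (fun _ => ⟨1, rfl⟩) (fun h => by omega))
        (mem_T0_one _)
  have := T_mul_T h1 h2
  rwa [add_zero, show 8 * (e / 8) = e - e % 8 by omega] at this

lemma coact_X1 : coactA2 (X 1 : DualSteenrod) =
    (1 : A2) ⊗ₜ[ZMod 2] (X 1 : DualSteenrod) +
      piq (X 0) ⊗ₜ[ZMod 2] ((X 0 : DualSteenrod) ^ 2) + piq (X 1) ⊗ₜ[ZMod 2] 1 := by
  rw [coact_X 1, Finset.sum_range_succ, Finset.sum_range_succ, Finset.sum_range_succ,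
    Finset.sum_range_zero, zero_add]
  norm_num [xb_succ, xb_zero, map_one]

lemma coact_X1_4 : coactA2 ((X 1 : DualSteenrod) ^ 4) =
    (1 : A2) ⊗ₜ[ZMod 2] ((X 1 : DualSteenrod) ^ 4) +
      piq ((X 0 : DualSteenrod) ^ 4) ⊗ₜ[ZMod 2] ((X 0 : DualSteenrod) ^ 8) := by
  rw [map_pow, coact_X1, pow4_add, pow4_add, Algebra.TensorProduct.tmul_pow,
    Algebra.TensorProduct.tmul_pow, Algebra.TensorProduct.tmul_pow, one_pow,
    ← map_pow piq (X 0), ← map_pow piq (X 1), piq_X1_4, TensorProduct.zero_tmul, add_zero,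
    ← pow_mul]

lemma key1 (e : ℕ) (he : 2 ∣ e) : coactA2 ((X 1 : DualSteenrod) ^ e) ∈ T ((e - e % 4) * 2) := by
  have hsplit : (X 1 : DualSteenrod) ^ e = ((X 1 : DualSteenrod) ^ 4) ^ (e / 4) * (X 1 : DualSteenrod) ^ (e % 4) := by
    rw [← pow_mul, ← pow_add]; congr 1; omega
  rw [hsplit, map_mul, map_pow]
  have h1 : coactA2 ((X 1 : DualSteenrod) ^ 4) ^ (e / 4) ∈ T ((e / 4) * 8) := by
    refine T_pow ?_ (e / 4)
    rw [coact_X1_4]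
    refine Submodule.add_mem _ ?_ ?_
    · have := mem_T_full 1 1 4 (fun h => by omega) (fun _ => by omega) (fun h => by omega)
      rwa [show 4 * 2 ^ 1 = 8 by norm_num] at this
    · have := mem_T_full (piq ((X 0 : DualSteenrod) ^ 4)) 0 8 (fun _ => by omega)
        (fun h => by omega) (fun h => by omega)
      rwa [show 8 * 2 ^ 0 = 8 by norm_num] at this
  have h2 : coactA2 ((X 1 : DualSteenrod) ^ (e % 4)) ∈ T 0 := by
    have h : e % 4 = 0 ∨ e % 4 = 2 := by omega
    rcases h with h | h <;> rw [h]
    · rw [pow_zero, map_one]; exact one_mem_T0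
    · rw [map_pow, coact_X1, sq_add, sq_add, Algebra.TensorProduct.tmul_pow,
        Algebra.TensorProduct.tmul_pow, Algebra.TensorProduct.tmul_pow, one_pow, one_pow,
        ← pow_mul]
      refine Submodule.add_mem _ (Submodule.add_mem _ ?_ ?_) (mem_T0_one _)
      · exact mem_T0_X 1 1 2 (fun h => by omega) (fun _ => ⟨1, rfl⟩)
      · exact mem_T0_X _ 0 (2 * 2) (fun _ => ⟨1, rfl⟩) (fun h => by omega)
  have := T_mul_T h1 h2
  rwa [add_zero, show e / 4 * 8 = (e - e % 4) * 2 by omega] at this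

lemma coact_X2 : coactA2 (X 2 : DualSteenrod) =
    (1 : A2) ⊗ₜ[ZMod 2] (X 2 : DualSteenrod) +
      piq (X 0) ⊗ₜ[ZMod 2] ((X 1 : DualSteenrod) ^ 2) +
      piq (X 1) ⊗ₜ[ZMod 2] ((X 0 : DualSteenrod) ^ 4) + piq (X 2) ⊗ₜ[ZMod 2] 1 := by
  rw [coact_X 2, Finset.sum_range_succ, Finset.sum_range_succ, Finset.sum_range_succ,
    Finset.sum_range_succ, Finset.sum_range_zero, zero_add]
  norm_num [xb_succ, xb_zero, map_one]

lemma key2 (e : ℕ) : coactA2 ((X 2 : DualSteenrod) ^ e) ∈ T ((e - e % 2) * 4) := by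
  have hsplit : (X 2 : DualSteenrod) ^ e = ((X 2 : DualSteenrod) ^ 2) ^ (e / 2) * (X 2 : DualSteenrod) ^ (e % 2) := by
    rw [← pow_mul, ← pow_add]; congr 1; omega
  rw [hsplit, map_mul, map_pow]
  have h1 : coactA2 ((X 2 : DualSteenrod) ^ 2) ^ (e / 2) ∈ T ((e / 2) * 8) := by
    refine T_pow ?_ (e / 2)
    rw [map_pow, coact_X2, sq_add, sq_add, sq_add, Algebra.TensorProduct.tmul_pow,
      Algebra.TensorProduct.tmul_pow, Algebra.TensorProduct.tmul_pow,
      Algebra.TensorProduct.tmul_pow, one_pow,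
      ← map_pow piq (X 2), piq_X2_2, TensorProduct.zero_tmul, add_zero, ← pow_mul, ← pow_mul]
    refine Submodule.add_mem _ (Submodule.add_mem _ ?_ ?_) ?_
    · have := mem_T_full 1 2 2 (fun h => by omega) (fun h => by omega) (fun _ => by omega)
      rwa [show 2 * 2 ^ 2 = 8 by norm_num] at this
    · have := mem_T_full (piq (X 0) ^ 2) 1 (2 * 2) (fun h => by omega) (fun _ => by omega)
        (fun h => by omega)
      rwa [show 2 * 2 * 2 ^ 1 = 8 by norm_num] at this
    · have := mem_T_full (piq (X 1) ^ 2) 0 (4 * 2) (fun _ => by omega) (fun h => by omega)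
        (fun h => by omega)
      rwa [show 4 * 2 * 2 ^ 0 = 8 by norm_num] at this
  have h2 : coactA2 ((X 2 : DualSteenrod) ^ (e % 2)) ∈ T 0 := by
    have h : e % 2 = 0 ∨ e % 2 = 1 := by omega
    rcases h with h | h <;> rw [h]
    · rw [pow_zero, map_one]; exact one_mem_T0
    · rw [pow_one, coact_X2]
      refine Submodule.add_mem _ (Submodule.add_mem _ (Submodule.add_mem _ ?_ ?_) ?_) (mem_T0_one _)
      · have := mem_T0_X 1 2 1 (fun h => by omega) (fun h => by omega)
        rwa [pow_one] at this
      · exact mem_T0_X _ 1 2 (fun h => by omega) (fun _ => ⟨1, rfl⟩)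
      · exact mem_T0_X _ 0 4 (fun _ => ⟨1, rfl⟩) (fun h => by omega)
  have := T_mul_T h1 h2
  rwa [add_zero, show e / 2 * 8 = (e - e % 2) * 4 by omega] at this

lemma coact_X_ge3 (k : ℕ) (hk : 3 ≤ k) : coactA2 (X k : DualSteenrod) ∈ T (2 ^ k) := by
  rw [coact_X k]
  refine Submodule.sum_mem _ fun p hp => ?_
  rcases Nat.lt_or_ge p 4 with h4 | h4
  · -- p ≤ 3 : genuine term
    have hke : k + 1 - p = (k - p) + 1 := by omega
    rw [hke, xb_succ]
    have base := mem_T_full (piq (xb p)) (k - p) (2 ^ p)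
      (fun h => by
        have hp3 : p = 3 := by omega
        subst hp3; decide)
      (fun h => by
        have hp : p = 2 ∨ p = 3 := by omega
        rcases hp with hp | hp <;> subst hp <;> decide)
      (fun h => by
        have hp : p = 1 ∨ p = 2 ∨ p = 3 := by omega
        rcases hp with hp | hp | hp <;> subst hp <;> decide)
    rwa [← pow_add, show p + (k - p) = k by omega] at base
  · -- p ≥ 4 : vanishing term
    obtain ⟨m, rfl⟩ : ∃ m, p = m + 1 := ⟨p - 1, by omega⟩
    rw [xb_succ, piq_X_ge3 m (by omega), TensorProduct.zero_tmul]
    exact Submodule.zero_mem _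

lemma key3 (k e : ℕ) (hk : 3 ≤ k) : coactA2 ((X k : DualSteenrod) ^ e) ∈ T (e * 2 ^ k) := by
  rw [map_pow]
  exact T_pow (coact_X_ge3 k hk) e

lemma keyAll (k e : ℕ) (h0 : k = 0 → 4 ∣ e) (h1 : k = 1 → 2 ∣ e) :
    coactA2 ((X k : DualSteenrod) ^ e) ∈ T (bgWeight (dHigh (Finsupp.single k e))) := by
  rw [bgWeight_dHigh_single]
  match k with
  | 0 =>
      have := key0 e (h0 rfl)
      rwa [show (e - lowr 0 e) * 2 ^ 0 = e - e % 8 by simp [lowr]]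
  | 1 =>
      have := key1 e (h1 rfl)
      rwa [show (e - lowr 1 e) * 2 ^ 1 = (e - e % 4) * 2 by simp [lowr]]
  | 2 =>
      have := key2 e
      rwa [show (e - lowr 2 e) * 2 ^ 2 = (e - e % 2) * 4 by simp [lowr]]
  | (m + 3) =>
      have := key3 (m + 3) e (by omega)
      rwa [show (e - lowr (m + 3) e) * 2 ^ (m + 3) = e * 2 ^ (m + 3) by simp [lowr]]

lemma coact_monomial (d : ℕ →₀ ℕ) (hd : isAA1 d) :
    coactA2 (monomial d (1 : ZMod 2)) ∈ T (bgWeight (dHigh d)) := by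
  rw [W_split]
  have hm : (monomial d (1 : ZMod 2) : DualSteenrod) = ∏ k ∈ d.support, (X k : DualSteenrod) ^ d k := by
    rw [monomial_eq, map_one, one_mul]; rfl
  rw [hm, map_prod]
  exact T_prod _ _ _ fun k _ =>
    keyAll k (d k) (fun h => by rw [h]; exact h ▸ hd.1) (fun h => by rw [h]; exact h ▸ hd.2)
noncomputable def bM : Module.Basis (ℕ →₀ ℕ) (ZMod 2) DualSteenrod :=
  MvPolynomial.basisMonomials ℕ (ZMod 2)

noncomputable def bT : Module.Basis ((ℕ →₀ ℕ) × (ℕ →₀ ℕ)) (ZMod 2)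
    (DualSteenrod ⊗[ZMod 2] DualSteenrod) := Module.Basis.tensorProduct bM bM

lemma bM_apply (d : ℕ →₀ ℕ) : bM d = monomial d 1 := by
  rw [bM, MvPolynomial.coe_basisMonomials]

lemma bT_apply (a b : ℕ →₀ ℕ) :
    bT (a, b) = (monomial a 1 : DualSteenrod) ⊗ₜ[ZMod 2] (monomial b 1 : DualSteenrod) := by
  rw [bT, Module.Basis.tensorProduct_apply, bM_apply, bM_apply]

lemma tau_bM (d : ℕ →₀ ℕ) : tau (bM d) = bT (dHigh d, dLow d) := by
  rw [bT_apply, bM]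
  exact Module.Basis.constr_basis _ _ _ d

lemma pair_inj {a b : ℕ →₀ ℕ} (h : (dHigh a, dLow a) = (dHigh b, dLow b)) : a = b := by
  have h1 : dHigh a + dLow a = dHigh b + dLow b := by
    rw [Prod.mk.injEq] at h
    rw [h.1, h.2]
  rwa [dHigh_add_dLow, dHigh_add_dLow] at h1

lemma repr_tau (x : DualSteenrod) (d0 : ℕ →₀ ℕ) :
    bT.repr (tau x) (dHigh d0, dLow d0) = bM.repr x d0 := by
  have h : ((Finsupp.lapply (dHigh d0, dLow d0) :
        (((ℕ →₀ ℕ) × (ℕ →₀ ℕ)) →₀ ZMod 2) →ₗ[ZMod 2] ZMod 2) ∘ₗ (bT.repr :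
        DualSteenrod ⊗[ZMod 2] DualSteenrod →ₗ[ZMod 2] _) ∘ₗ tau) =
      ((Finsupp.lapply d0 : ((ℕ →₀ ℕ) →₀ ZMod 2) →ₗ[ZMod 2] ZMod 2) ∘ₗ
        (bM.repr : DualSteenrod →ₗ[ZMod 2] _)) := by
    apply bM.ext
    intro d
    simp only [LinearMap.coe_comp, Function.comp_apply, LinearEquiv.coe_coe,
      Finsupp.lapply_apply, tau_bM, Module.Basis.repr_self]
    rw [Finsupp.single_apply, Finsupp.single_apply]
    by_cases hd : d = d0
    · subst hd; rw [if_pos rfl, if_pos rfl]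
    · rw [if_neg hd, if_neg (fun hc => hd (pair_inj hc))]
  exact LinearMap.congr_fun h x

lemma VAA1_eq : VAA1 = Submodule.span (ZMod 2) (⇑bM '' {d | isAA1 d}) := by
  rw [VAA1]
  congr 1
  ext m
  simp only [Set.mem_image, Set.mem_setOf_eq, bM_apply]
  exact ⟨fun ⟨d, h1, h2⟩ => ⟨d, h1, h2.symm⟩, fun ⟨d, h1, h2⟩ => ⟨d, h1, h2.symm⟩⟩

lemma Wge_eq (j : ℕ) : Wge j = Submodule.span (ZMod 2)
    (⇑bT '' {p : (ℕ →₀ ℕ) × (ℕ →₀ ℕ) |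
      isAA2 p.1 ∧ 8 * j ≤ bgWeight p.1 ∧ isExtMono p.2}) := by
  rw [Wge]
  congr 1
  ext t
  simp only [Set.mem_image, Set.mem_setOf_eq]
  constructor
  · rintro ⟨a, b, h1, h2, h3, rfl⟩
    exact ⟨(a, b), ⟨h1, h2, h3⟩, (bT_apply a b)⟩
  · rintro ⟨⟨a, b⟩, ⟨h1, h2, h3⟩, rfl⟩
    exact ⟨a, b, h1, h2, h3, (bT_apply a b)⟩

lemma filt_sub (j : ℕ) (x : DualSteenrod) (hx : x ∈ Filt j) :
    x ∈ Submodule.span (ZMod 2)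
      (⇑bM '' {d | isAA1 d ∧ 8 * j ≤ bgWeight (dHigh d)}) := by
  rw [Filt, Submodule.mem_inf] at hx
  obtain ⟨h1, h2⟩ := hx
  rw [VAA1_eq, Module.Basis.mem_span_image] at h1
  rw [Submodule.mem_comap, Wge_eq, Module.Basis.mem_span_image] at h2
  rw [Module.Basis.mem_span_image]
  intro d hd
  refine ⟨h1 hd, ?_⟩
  have hne : bM.repr x d ≠ 0 := Finsupp.mem_support_iff.1 hd
  have hne2 : bT.repr (tau x) (dHigh d, dLow d) ≠ 0 := by
    rw [repr_tau]; exact hne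
  have hmem := h2 (Finsupp.mem_support_iff.2 hne2)
  exact hmem.2.1

lemma isAA2_dHigh (e : ℕ →₀ ℕ) : isAA2 (dHigh e) := by
  refine ⟨?_, ?_, ?_⟩ <;> rw [dHigh_apply] <;> simp only [lowr] <;> norm_num <;> omega

lemma isExtMono_dLow (e : ℕ →₀ ℕ) (he : isAA1 e) : isExtMono (dLow e) := by
  obtain ⟨h0, h1⟩ := he
  refine ⟨?_, ?_, ?_, ?_⟩
  · rw [dLow_apply]; simp only [lowr]; norm_num; omega
  · rw [dLow_apply]; simp only [lowr]; norm_num; omega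
  · rw [dLow_apply]; simp only [lowr]; norm_num; omega
  · intro k hk
    rw [dLow_apply]
    unfold lowr
    split_ifs <;> omega

lemma mem_Filt (j : ℕ) (e : ℕ →₀ ℕ) (he : isAA1 e) (hw : 8 * j ≤ bgWeight (dHigh e)) :
    (monomial e 1 : DualSteenrod) ∈ Filt j := by
  constructor
  · exact Submodule.subset_span ⟨e, he, rfl⟩
  · show tau (monomial e 1) ∈ Wge j
    rw [← bM_apply, tau_bM, bT_apply]
    exact Submodule.subset_span ⟨dHigh e, dLow e, isAA2_dHigh e, hw, isExtMono_dLow e he, rfl⟩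

end Stmt11Aux

theorem stmt11' (j : ℕ) (x : DualSteenrod) (hx : x ∈ Filt j) :
    coactA2 x ∈ Submodule.span (ZMod 2)
      {t : A2 ⊗[ZMod 2] DualSteenrod | ∃ q : A2, ∃ y ∈ Filt j, t = q ⊗ₜ[ZMod 2] y} := by
  open Stmt11Aux MvPolynomial in
  have hT : Stmt11Aux.T (8 * j) ≤ Submodule.span (ZMod 2)
      {t : A2 ⊗[ZMod 2] DualSteenrod | ∃ q : A2, ∃ y ∈ Filt j, t = q ⊗ₜ[ZMod 2] y} := by
    have hsub : {t : Stmt11Aux.TT | ∃ (q : A2) (e : ℕ →₀ ℕ), isAA1 e ∧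
        8 * j ≤ bgWeight (dHigh e) ∧ t = q ⊗ₜ[ZMod 2] (MvPolynomial.monomial e 1)} ⊆
        {t : A2 ⊗[ZMod 2] DualSteenrod | ∃ q : A2, ∃ y ∈ Filt j, t = q ⊗ₜ[ZMod 2] y} := by
      rintro t ⟨q, e, h1, h2, rfl⟩
      exact ⟨q, MvPolynomial.monomial e 1, Stmt11Aux.mem_Filt j e h1 h2, rfl⟩
    rw [Stmt11Aux.T]
    exact Submodule.span_le.2 (hsub.trans Submodule.subset_span)
  apply hT
  have hx' := Stmt11Aux.filt_sub j x hx
  clear hx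
  induction hx' using Submodule.span_induction with
  | mem m hm =>
      obtain ⟨d, ⟨hA, hw⟩, rfl⟩ := hm
      rw [Stmt11Aux.bM_apply]
      exact Stmt11Aux.T_mono hw (Stmt11Aux.coact_monomial d hA)
  | zero => rw [map_zero]; exact Submodule.zero_mem _
  | add u v hu hv ihu ihv => rw [map_add]; exact Submodule.add_mem _ ihu ihv
  | smul c u hu ihu => rw [map_smul]; exact Submodule.smul_mem _ _ ihu

/-- each `F^j (A ⫽ A(1))_*` is an `A(2)_*`-subcomodule of
`(A ⫽ A(1))_*`: the `A(2)_*`-coaction preserves (or raises) the filtration. -/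
theorem stmt11 (j : ℕ) (x : DualSteenrod) (hx : x ∈ Filt j) :
    coactA2 x ∈ Submodule.span (ZMod 2)
      {t : A2 ⊗[ZMod 2] DualSteenrod | ∃ q : A2, ∃ y ∈ Filt j, t = q ⊗ₜ[ZMod 2] y} := by
  exact stmt11' j x hx
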